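/- Binding rate constraints at the optimum: assume Q, B, N_0 > 0 and H_{i,n} > 0 for every broadcast block. If ({T*_{i,n}}, {p*_{i,n}}) is an optimal solution of problem (P3.1), then for every broadcast block (i,n) the rate constraint holds with equality: T*_{i,n}·B·log₂(1 + p*_{i,n}H_{i,n}/N_0) = Q. -/
import Mathlib


noncomputable section

/-- Binary indicators. -/
def IsBinary {K N : ℕ} (α : Fin (K+1) → Fin (N+1) → Fin (K+1) → ℝ) : Prop :=
  ∀ i n k, α i n k = 0 ∨ α i n k = 1

/-- Block `(i,n)` is broadcast iff some device requests it, i.e. `α* i n = max_k α* i n k = 1`. -/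
def Broadcast {K N : ℕ} (α : Fin (K+1) → Fin (N+1) → Fin (K+1) → ℝ)
    (i : Fin (K+1)) (n : Fin (N+1)) : Prop :=
  ∃ k, α i n k = 1

/-- Feasibility for problem (P3.1): nonnegative latencies and powers, the rate
constraint `Q ≤ T_{i,n} * B * log₂(1 + p_{i,n} H_{i,n} / N0)` for every broadcast
block, and the total energy budget. -/
def P31Feasible {K N : ℕ} (Q B N0 E : ℝ)
    (α : Fin (K+1) → Fin (N+1) → Fin (K+1) → ℝ)
    (Heq : Fin (K+1) → Fin (N+1) → ℝ)
    (T p : Fin (K+1) → Fin (N+1) → ℝ) : Prop :=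
  (∀ i n, 0 ≤ T i n) ∧ (∀ i n, 0 ≤ p i n) ∧
  (∀ i n, Broadcast α i n →
    Q ≤ T i n * (B * Real.logb 2 (1 + p i n * Heq i n / N0))) ∧
  ∑ i, ∑ n, T i n * p i n ≤ E

/-- **Binding rate constraints at the optimum.**
Assume `Q, B, N0 > 0` and `H_{i,n} > 0` for every broadcast block.  If
`(T*, p*)` is an optimal solution of problem (P3.1), then for every broadcast
block `(i,n)` the rate constraint holds with equality:
`T*_{i,n} * B * log₂(1 + p*_{i,n} H_{i,n} / N0) = Q`. -/
theorem binding_rate_constraints {K N : ℕ}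
    (Q B N0 E : ℝ) (hQ : 0 < Q) (hB : 0 < B) (hN0 : 0 < N0) (hE : 0 < E)
    (α : Fin (K+1) → Fin (N+1) → Fin (K+1) → ℝ) (hα : IsBinary α)
    (Heq : Fin (K+1) → Fin (N+1) → ℝ)
    (hHeq : ∀ i n, Broadcast α i n → 0 < Heq i n)
    (Tstar pstar : Fin (K+1) → Fin (N+1) → ℝ)
    (hfeas : P31Feasible Q B N0 E α Heq Tstar pstar)
    (hopt : ∀ T p : Fin (K+1) → Fin (N+1) → ℝ,
      P31Feasible Q B N0 E α Heq T p →
      ∑ i, ∑ n, Tstar i n ≤ ∑ i, ∑ n, T i n) :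
    ∀ i n, Broadcast α i n →
      Tstar i n * (B * Real.logb 2 (1 + pstar i n * Heq i n / N0)) = Q := by
  obtain ⟨hT, hp, hrate, hEn⟩ := hfeas
  intro i n hbc
  set R := B * Real.logb 2 (1 + pstar i n * Heq i n / N0) with hRdef
  by_contra hne
  have hQle : Q ≤ Tstar i n * R := hrate i n hbc
  have hTpos : 0 < Tstar i n := by
    rcases (hT i n).lt_or_eq with h | h
    · exact h
    · exfalso; rw [← h] at hQle; simp at hQle; linarith
  have hRpos : 0 < R := by
    by_contra h
    push_neg at h
    nlinarith
  have hlt : Q < Tstar i n * R := lt_of_le_of_ne hQle (Ne.symm hne)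
  set T' : Fin (K+1) → Fin (N+1) → ℝ :=
    fun i' n' => if i' = i ∧ n' = n then Q / R else Tstar i' n' with hT'def
  have hT'le : ∀ i' n', T' i' n' ≤ Tstar i' n' := by
    intro i' n'
    simp only [hT'def]
    split_ifs with h
    · obtain ⟨h1, h2⟩ := h
      subst h1; subst h2
      rw [div_le_iff₀ hRpos]
      linarith
    · exact le_rfl
  have hT'lt : T' i n < Tstar i n := by
    have : T' i n = Q / R := by simp [hT'def]
    rw [this, div_lt_iff₀ hRpos]
    linarith
  have hfeas' : P31Feasible Q B N0 E α Heq T' pstar := by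
    refine ⟨?_, hp, ?_, ?_⟩
    · intro i' n'
      simp only [hT'def]
      split_ifs with h
      · positivity
      · exact hT i' n'
    · intro i' n' hbc'
      by_cases h : i' = i ∧ n' = n
      · have hv : T' i' n' = Q / R := by simp [hT'def, h.1, h.2]
        rw [hv, h.1, h.2, div_mul_cancel₀ _ (ne_of_gt hRpos)]
      · have : T' i' n' = Tstar i' n' := by simp [hT'def, h]
        rw [this]
        exact hrate i' n' hbc'
    · refine le_trans ?_ hEn
      apply Finset.sum_le_sum
      intro i' _
      apply Finset.sum_le_sum
      intro n' _
      exact mul_le_mul_of_nonneg_right (hT'le i' n') (hp i' n')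
  have hlt_sum : ∑ i', ∑ n', T' i' n' < ∑ i', ∑ n', Tstar i' n' := by
    rw [← Finset.sum_product', ← Finset.sum_product']
    apply Finset.sum_lt_sum
    · intro x _
      exact hT'le x.1 x.2
    · exact ⟨(i, n), Finset.mem_univ _, hT'lt⟩
  exact absurd (hopt T' pstar hfeas') (not_le.mpr hlt_sum)
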